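/- arXiv:2308.02175 — 5 statements merged into one kernel-verified Lean document; each statement's English description precedes it below -/
import Mathlib

section
/- Let T be an invertible measure-preserving transformation of a probability space (X, μ) and f ∈ L²_μ such that the Krylov basis ℬ_d = (f, f∘T⁻¹, …, f∘T^{−d+1}) is linearly independent. Let c = (c_0, …, c_{d−1}) ∈ ℂ^d be the unique minimizer of J(c) = ∫_X |f(Tx) − Σ_{j=0}^{d−1} c_j f(T^{−j}x)|² dμ(x), and define the linear operator 𝒰_d : 𝒦_d → 𝒦_d on the basis ℬ_d by 𝒰_d(f∘T^{−j}) = f∘T^{−j+1} for j = 1, …, d−1 and 𝒰_d f = Σ_{j=0}^{d−1} c_j f∘T^{−j}. Then for every g ∈ 𝒦_d one has 𝒰_d g = Π_{𝒦_d}(g∘T); that is, 𝒰_d is the L²_μ-orthogonal projection of the Koopman operator 𝒰 onto 𝒦_d. -/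
open MeasureTheory Filter

/-- The Koopman operator `𝒰_T : g ↦ g ∘ T` on `L²_μ`. -/
noncomputable def koopman {X : Type*} [MeasurableSpace X] {μ : Measure X}
    (T : X → X) (hT : MeasurePreserving T μ μ) : Lp ℂ 2 μ →L[ℂ] Lp ℂ 2 μ :=
  (Lp.compMeasurePreservingₗᵢ ℂ T hT).toContinuousLinearMap

/-- The Krylov space `𝒦_d = span {f, f∘T⁻¹, …, f∘T^{-d+1}}`, where `T'` plays the role of
the (essential) inverse of `T`. -/
noncomputable def krylov {X : Type*} [MeasurableSpace X] {μ : Measure X}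
    (T' : X → X) (hT' : MeasurePreserving T' μ μ) (f : Lp ℂ 2 μ) (d : ℕ) :
    Submodule ℂ (Lp ℂ 2 μ) :=
  Submodule.span ℂ (Set.range fun j : Fin d => ((koopman T' hT') ^ (j : ℕ)) f)

instance {X : Type*} [MeasurableSpace X] {μ : Measure X}
    (T' : X → X) (hT' : MeasurePreserving T' μ μ) (f : Lp ℂ 2 μ) (d : ℕ) :
    FiniteDimensional ℂ (krylov T' hT' f d) :=
  FiniteDimensional.span_of_finite ℂ (Set.finite_range _)

lemma koopman_comp_inv {X : Type*} [MeasurableSpace X] {μ : Measure X}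
    (T T' : X → X) (hT : MeasurePreserving T μ μ) (hT' : MeasurePreserving T' μ μ)
    (hinv₁ : ∀ᵐ x ∂μ, T' (T x) = x) (g : Lp ℂ 2 μ) :
    koopman T hT (koopman T' hT' g) = g := by
  apply Lp.ext
  have h1 : (koopman T hT (koopman T' hT' g) : X → ℂ) =ᵐ[μ]
      (koopman T' hT' g : X → ℂ) ∘ T := Lp.coeFn_compMeasurePreserving _ hT
  have h2 : (koopman T' hT' g : X → ℂ) =ᵐ[μ] (g : X → ℂ) ∘ T' :=
    Lp.coeFn_compMeasurePreserving _ hT'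
  have h3 : ((koopman T' hT' g : X → ℂ) ∘ T) =ᵐ[μ] ((g : X → ℂ) ∘ T') ∘ T :=
    ae_eq_comp (μ := μ) (f := T) hT.aemeasurable (by rwa [hT.map_eq])
  refine h1.trans (h3.trans ?_)
  filter_upwards [hinv₁] with x hx
  simp [Function.comp, hx]

/-- if the Krylov family `ℬ_d = (f, f∘T⁻¹, …, f∘T^{-d+1})` is linearly
independent, `c` is the unique minimizer of the least-squares loss
`J(c) = ∫ |f(Tx) − Σ_j c_j f(T^{-j}x)|² dμ = ‖𝒰f − Σ_j c_j 𝒰'^j f‖²`, and `𝒰_d` is the linear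
operator defined on `ℬ_d` by `𝒰_d (f∘T^{-j}) = f∘T^{-j+1}` (for `1 ≤ j ≤ d−1`) and
`𝒰_d f = Σ_j c_j f∘T^{-j}`, then on `𝒦_d` the operator `𝒰_d` coincides with the
`L²_μ`-orthogonal projection of the Koopman operator `𝒰` onto `𝒦_d`. -/
theorem filter_is_orthogonal_projection_of_koopman
    {X : Type*} [MeasurableSpace X] (μ : Measure X) [IsProbabilityMeasure μ]
    (T T' : X → X) (hT : MeasurePreserving T μ μ) (hT' : MeasurePreserving T' μ μ)
    (hinv₁ : ∀ᵐ x ∂μ, T' (T x) = x) (hinv₂ : ∀ᵐ x ∂μ, T (T' x) = x)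
    (f : Lp ℂ 2 μ) (d : ℕ) (hd : 0 < d)
    (hli : LinearIndependent ℂ (fun j : Fin d => ((koopman T' hT') ^ (j : ℕ)) f))
    (c : Fin d → ℂ)
    (hmin : ∀ c' : Fin d → ℂ,
      ‖koopman T hT f - ∑ j : Fin d, c j • ((koopman T' hT') ^ (j : ℕ)) f‖ ^ 2 ≤
      ‖koopman T hT f - ∑ j : Fin d, c' j • ((koopman T' hT') ^ (j : ℕ)) f‖ ^ 2)
    (huniq : ∀ c' : Fin d → ℂ,
      (∀ c'' : Fin d → ℂ,
        ‖koopman T hT f - ∑ j : Fin d, c' j • ((koopman T' hT') ^ (j : ℕ)) f‖ ^ 2 ≤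
        ‖koopman T hT f - ∑ j : Fin d, c'' j • ((koopman T' hT') ^ (j : ℕ)) f‖ ^ 2) → c' = c)
    (Ud : Lp ℂ 2 μ →ₗ[ℂ] Lp ℂ 2 μ)
    (hUd_f : Ud f = ∑ j : Fin d, c j • ((koopman T' hT') ^ (j : ℕ)) f)
    (hUd_shift : ∀ j : Fin d, (j : ℕ) ≠ 0 →
      Ud (((koopman T' hT') ^ (j : ℕ)) f) = ((koopman T' hT') ^ ((j : ℕ) - 1)) f) :
    ∀ g ∈ krylov T' hT' f d,
      Ud g = ((Submodule.orthogonalProjectionOnto (krylov T' hT' f d)) (koopman T hT g) : Lp ℂ 2 μ) :=  by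
  classical
  set U' := koopman T' hT' with hU'
  set K := krylov T' hT' f d with hK
  set u := koopman T hT f with hu
  set w := ∑ j : Fin d, c j • ((U') ^ (j : ℕ)) f with hw
  have hmemb : ∀ j : Fin d, ((U') ^ (j : ℕ)) f ∈ K := fun j =>
    Submodule.subset_span ⟨j, rfl⟩
  have hwmem : w ∈ K := Submodule.sum_mem _ fun j _ => Submodule.smul_mem _ _ (hmemb j)
  -- every element of K is a linear combination
  have hrep : ∀ v ∈ K, ∃ c' : Fin d → ℂ, ∑ j : Fin d, c' j • ((U') ^ (j : ℕ)) f = v := by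
    intro v hv
    rw [hK, krylov, Submodule.mem_span_range_iff_exists_fun] at hv
    exact hv
  -- w is the orthogonal projection of u
  have hproj : (Submodule.orthogonalProjectionOnto K u : Lp ℂ 2 μ) = w := by
    apply Submodule.eq_starProjection_of_mem_of_inner_eq_zero hwmem
    rw [← Submodule.norm_eq_iInf_iff_inner_eq_zero K hwmem]
    haveI : Nonempty K := ⟨0⟩
    have hbdd : BddBelow (Set.range fun v : K => ‖u - (v : Lp ℂ 2 μ)‖) :=
      ⟨0, by rintro x ⟨v, rfl⟩; exact norm_nonneg _⟩
    refine le_antisymm (le_ciInf fun v => ?_) (ciInf_le hbdd ⟨w, hwmem⟩)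
    obtain ⟨c', hc'⟩ := hrep v v.2
    have := hmin c'
    rw [hc'] at this
    exact le_of_pow_le_pow_left₀ two_ne_zero (norm_nonneg _) this
  -- reduce to generators by span induction
  intro g hg
  refine Submodule.span_induction ?_ ?_ ?_ ?_ hg
  · rintro x ⟨j, rfl⟩
    dsimp only
    by_cases hj : (j : ℕ) = 0
    · have hx : ((U') ^ (j : ℕ)) f = f := by rw [hj]; simp
      rw [hx, hUd_f]; exact hproj.symm
    · rw [hUd_shift j hj]
      have hk : koopman T hT (((U') ^ (j : ℕ)) f) = ((U') ^ ((j : ℕ) - 1)) f := by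
        obtain ⟨k, hkk⟩ := Nat.exists_eq_succ_of_ne_zero hj
        rw [hkk]
        simp only [pow_succ', Nat.succ_sub_one, ContinuousLinearMap.mul_apply]
        exact koopman_comp_inv T T' hT hT' hinv₁ _
      rw [hk]
      have hmem : ((U') ^ ((j : ℕ) - 1)) f ∈ K := by
        have hlt : (j : ℕ) - 1 < d := lt_of_le_of_lt (Nat.sub_le _ _) j.2
        exact Submodule.subset_span ⟨⟨(j : ℕ) - 1, hlt⟩, rfl⟩
      exact (Submodule.starProjection_eq_self_iff.mpr hmem).symm
  · simp
  · intro x y hx hy ihx ihy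
    simp only [map_add, ihx, ihy, Submodule.coe_add]
  · intro a x hx ihx
    simp only [_root_.map_smul, ihx, Submodule.coe_smul]
end

section
/- Let ν be a Borel probability measure on the unit circle 𝕋 = {z ∈ ℂ : |z| = 1}. If the function z ↦ z⁻¹ (equivalently, z ↦ z̄ on 𝕋) belongs to the closure in L²(𝕋, ν; ℂ) of the linear span of the monomials {z ↦ zⁿ : n ≥ 0}, then that closed linear span equals all of L²(𝕋, ν; ℂ); that is, the polynomials in z are dense in L²(𝕋, ν; ℂ). -/
open MeasureTheory Filter

noncomputable instance : MeasurableSpace Circle := borel Circle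
instance : BorelSpace Circle := ⟨rfl⟩

section Aux

variable (ν : Measure Circle) [IsProbabilityMeasure ν]

lemma continuous_circle_inv : Continuous fun z : Circle => ((z : ℂ))⁻¹ :=
  Continuous.inv₀ continuous_subtype_val fun z => z.coe_ne_zero

lemma memLp_inv_mul (f : Lp ℂ 2 ν) :
    MemLp (fun z : Circle => ((z : ℂ))⁻¹ * f z) 2 ν := by
  constructor
  · exact ((continuous_circle_inv).aestronglyMeasurable).mul (Lp.aestronglyMeasurable f)
  · have h : eLpNorm (fun z : Circle => ((z : ℂ))⁻¹ * f z) 2 ν = eLpNorm f 2 ν := by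
      rw [← eLpNorm_norm (fun z : Circle => ((z : ℂ))⁻¹ * f z), ← eLpNorm_norm (f : Circle → ℂ)]
      apply eLpNorm_congr_ae
      filter_upwards with z
      simp [norm_mul, Circle.norm_coe]
    rw [h]
    exact Lp.eLpNorm_lt_top f

/-- Multiplication by `z⁻¹` as a linear map on `L²`. -/
noncomputable def Minv : Lp ℂ 2 ν →ₗ[ℂ] Lp ℂ 2 ν where
  toFun f := (memLp_inv_mul ν f).toLp _
  map_add' f g := by
    apply Lp.ext
    filter_upwards [(memLp_inv_mul ν (f + g)).coeFn_toLp, (memLp_inv_mul ν f).coeFn_toLp,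
      (memLp_inv_mul ν g).coeFn_toLp, Lp.coeFn_add f g,
      Lp.coeFn_add ((memLp_inv_mul ν f).toLp _) ((memLp_inv_mul ν g).toLp _)] with z h1 h2 h3 h4 h5
    rw [h1, h4, h5, Pi.add_apply, Pi.add_apply, h2, h3, mul_add]
  map_smul' c f := by
    apply Lp.ext
    filter_upwards [(memLp_inv_mul ν (c • f)).coeFn_toLp, (memLp_inv_mul ν f).coeFn_toLp,
      Lp.coeFn_smul c f, Lp.coeFn_smul c ((memLp_inv_mul ν f).toLp _)] with z h1 h2 h3 h4
    simp only [RingHom.id_apply] at *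
    rw [h1, h4, Pi.smul_apply, h2, h3, Pi.smul_apply, smul_eq_mul, smul_eq_mul]
    ring

lemma Minv_coeFn (f : Lp ℂ 2 ν) :
    (Minv ν f : Circle → ℂ) =ᵐ[ν] fun z : Circle => ((z : ℂ))⁻¹ * f z :=
  (memLp_inv_mul ν f).coeFn_toLp

lemma Minv_continuous : Continuous (Minv ν) := by
  refine ((Minv ν).mkContinuous 1 ?_).continuous
  intro f
  rw [one_mul]
  have : ‖Minv ν f‖ = (eLpNorm (fun z : Circle => ((z : ℂ))⁻¹ * f z) 2 ν).toReal :=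
    Lp.norm_toLp _ (memLp_inv_mul ν f)
  rw [this]
  have h : eLpNorm (fun z : Circle => ((z : ℂ))⁻¹ * f z) 2 ν = eLpNorm f 2 ν := by
    rw [← eLpNorm_norm (fun z : Circle => ((z : ℂ))⁻¹ * f z), ← eLpNorm_norm (f : Circle → ℂ)]
    apply eLpNorm_congr_ae
    filter_upwards with z
    simp [norm_mul, Circle.norm_coe]
  rw [h, ← Lp.norm_def]

/-- The characters `z ↦ z^k`, `k : ℤ`, as continuous maps. -/
noncomputable def char (k : ℤ) : C(Circle, ℂ) :=
  ⟨fun z => (z : ℂ) ^ k, Continuous.zpow₀ continuous_subtype_val k fun z => Or.inl (Circle.coe_ne_zero z)⟩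

lemma char_apply (k : ℤ) (z : Circle) : char k z = (z : ℂ) ^ k := rfl

lemma char_mul (j k : ℤ) : char j * char k = char (j + k) := by
  ext z
  simp [char_apply, ← zpow_add₀ z.coe_ne_zero]

lemma char_zero : char 0 = 1 := by ext z; simp [char_apply]

lemma star_char (k : ℤ) : star (char k) = char (-k) := by
  ext z
  simp only [ContinuousMap.star_apply, char_apply, RCLike.star_def]
  rw [map_zpow₀, ← Circle.coe_inv_eq_conj, Circle.coe_inv, inv_zpow, ← zpow_neg]

/-- The span of all characters as a star subalgebra. -/
noncomputable def charAlg : StarSubalgebra ℂ C(Circle, ℂ) where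
  carrier := (Submodule.span ℂ (Set.range char) : Set C(Circle, ℂ))
  add_mem' ha hb := Submodule.add_mem _ ha hb
  zero_mem' := Submodule.zero_mem _
  mul_mem' := by
    intro a b ha hb
    have := Submodule.mul_mem_mul (M := Submodule.span ℂ (Set.range char))
      (N := Submodule.span ℂ (Set.range char)) ha hb
    rw [Submodule.span_mul_span] at this
    refine Submodule.span_le.2 ?_ this
    rintro x ⟨u, ⟨j, rfl⟩, v, ⟨k, rfl⟩, rfl⟩
    show char j * char k ∈ _
    rw [char_mul]
    exact Submodule.subset_span ⟨j + k, rfl⟩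
  one_mem' := by
    have h0 : char 0 ∈ Submodule.span ℂ (Set.range char) := Submodule.subset_span ⟨0, rfl⟩
    rwa [char_zero] at h0
  algebraMap_mem' := fun c => by
    have h0 : char 0 ∈ Submodule.span ℂ (Set.range char) := Submodule.subset_span ⟨0, rfl⟩
    rw [char_zero] at h0
    rw [Algebra.algebraMap_eq_smul_one]
    exact Submodule.smul_mem _ c h0
  star_mem' := by
    intro a ha
    induction ha using Submodule.span_induction with
    | mem x hx =>
      obtain ⟨k, rfl⟩ := hx
      rw [star_char]
      exact Submodule.subset_span ⟨-k, rfl⟩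
    | zero => simpa using Submodule.zero_mem _
    | add x y _ _ hx hy => rw [star_add]; exact Submodule.add_mem _ hx hy
    | smul c x _ hx => rw [star_smul]; exact Submodule.smul_mem _ _ hx

lemma charAlg_dense : Dense ((Submodule.span ℂ (Set.range char) : Submodule ℂ C(Circle, ℂ)) :
    Set C(Circle, ℂ)) := by
  have h1 : StarAlgebra.adjoin ℂ ({char 1} : Set C(Circle, ℂ)) ≤ charAlg := by
    apply StarAlgebra.adjoin_le
    simp only [Set.singleton_subset_iff]
    exact Submodule.subset_span ⟨1, rfl⟩
  have h2 : (StarAlgebra.adjoin ℂ ({char 1} : Set C(Circle, ℂ))).topologicalClosure = ⊤ := by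
    apply ContinuousMap.starSubalgebra_topologicalClosure_eq_top_of_separatesPoints
    intro x y hxy
    refine ⟨_, ⟨char 1, StarAlgebra.subset_adjoin ℂ _ rfl, rfl⟩, ?_⟩
    simp only [char_apply, zpow_one]
    exact fun h => hxy (Circle.ext h)
  rw [dense_iff_closure_eq]
  apply Set.eq_univ_of_subset
  · exact closure_mono h1
  · have := congrArg (fun A : StarSubalgebra ℂ C(Circle, ℂ) => (A : Set C(Circle, ℂ))) h2
    simpa [StarSubalgebra.topologicalClosure_coe] using this

end Aux

/-- Kolmogorov-type density transfer on the circle: if `z ↦ z⁻¹` lies in the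
`L²(ν)`-closure of the span of the monomials `z ↦ zⁿ`, `n ≥ 0`, then the polynomials are
dense in `L²(𝕋, ν; ℂ)`.  Here `mono n` and `invm` are the elements of `L²(ν)` represented
by the functions `z ↦ zⁿ` and `z ↦ z⁻¹` respectively. -/
theorem polynomials_dense_of_inv_mem
    (ν : Measure Circle) [IsProbabilityMeasure ν]
    (mono : ℕ → Lp ℂ 2 ν)
    (hmono : ∀ n : ℕ, (mono n : Circle → ℂ) =ᵐ[ν] fun z : Circle => (z : ℂ) ^ n)
    (invm : Lp ℂ 2 ν)
    (hinvm : (invm : Circle → ℂ) =ᵐ[ν] fun z : Circle => ((z : ℂ))⁻¹)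
    (hmem : invm ∈ (Submodule.span ℂ (Set.range mono)).topologicalClosure) :
    (Submodule.span ℂ (Set.range mono)).topologicalClosure = ⊤ := by
  set S := (Submodule.span ℂ (Set.range mono)).topologicalClosure with hS
  -- S is invariant under multiplication by z⁻¹
  have hMinvS : ∀ f ∈ S, Minv ν f ∈ S := by
    intro f hf
    have hgen : ∀ x ∈ Submodule.span ℂ (Set.range mono), Minv ν x ∈ S := by
      intro x hx
      induction hx using Submodule.span_induction with
      | mem x hx =>
        obtain ⟨n, rfl⟩ := hx
        cases n with
        | zero =>
          have : Minv ν (mono 0) = invm := by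
            apply Lp.ext
            filter_upwards [Minv_coeFn ν (mono 0), hmono 0, hinvm] with z h1 h2 h3
            rw [h1, h2, h3, pow_zero, mul_one]
          rw [this]; exact hmem
        | succ n =>
          have : Minv ν (mono (n + 1)) = mono n := by
            apply Lp.ext
            filter_upwards [Minv_coeFn ν (mono (n + 1)), hmono (n + 1), hmono n] with z h1 h2 h3
            rw [h1, h2, h3, pow_succ', ← mul_assoc, inv_mul_cancel₀ (Circle.coe_ne_zero z), one_mul]
          rw [this]
          exact Submodule.le_topologicalClosure _ (Submodule.subset_span ⟨n, rfl⟩)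
      | zero => simpa using Submodule.zero_mem S
      | add x y _ _ hx hy => rw [map_add]; exact Submodule.add_mem S hx hy
      | smul c x _ hx => rw [_root_.map_smul]; exact Submodule.smul_mem S c hx
    have : Minv ν f ∈ closure (S : Set (Lp ℂ 2 ν)) := by
      have hf' : f ∈ closure ((Submodule.span ℂ (Set.range mono) : Submodule ℂ (Lp ℂ 2 ν)) :
          Set (Lp ℂ 2 ν)) := hf
      exact map_mem_closure (Minv_continuous ν) hf' hgen
    rwa [IsClosed.closure_eq (Submodule.isClosed_topologicalClosure _)] at this
  -- negative powers: seq n ∈ S represents z^(-n)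
  have hseq : ∀ n : ℕ, ∃ g ∈ S, (g : Circle → ℂ) =ᵐ[ν] fun z : Circle => ((z : ℂ) ^ n)⁻¹ := by
    intro n
    induction n with
    | zero =>
      refine ⟨mono 0, Submodule.le_topologicalClosure _ (Submodule.subset_span ⟨0, rfl⟩), ?_⟩
      filter_upwards [hmono 0] with z h
      simp [h]
    | succ n ih =>
      obtain ⟨g, hgS, hg⟩ := ih
      refine ⟨Minv ν g, hMinvS g hgS, ?_⟩
      filter_upwards [Minv_coeFn ν g, hg] with z h1 h2
      rw [h1, h2, pow_succ, mul_inv, mul_comm]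
  -- all characters belong to S (as Lp elements)
  have hchar : ∀ k : ℤ, (ContinuousMap.toLp (E := ℂ) 2 ν ℂ) (char k) ∈ S := by
    intro k
    rcases le_or_gt 0 k with hk | hk
    · have : (ContinuousMap.toLp (E := ℂ) 2 ν ℂ) (char k) = mono k.toNat := by
        apply Lp.ext
        filter_upwards [ContinuousMap.coeFn_toLp (p := 2) (μ := ν) (𝕜 := ℂ) (char k), hmono k.toNat] with z h1 h2
        rw [h1, h2, char_apply, ← zpow_natCast, Int.toNat_of_nonneg hk]
      rw [this]
      exact Submodule.le_topologicalClosure _ (Submodule.subset_span ⟨k.toNat, rfl⟩)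
    · obtain ⟨g, hgS, hg⟩ := hseq (-k).toNat
      have : (ContinuousMap.toLp (E := ℂ) 2 ν ℂ) (char k) = g := by
        apply Lp.ext
        filter_upwards [ContinuousMap.coeFn_toLp (p := 2) (μ := ν) (𝕜 := ℂ) (char k), hg] with z h1 h2
        rw [h1, h2, char_apply, ← zpow_natCast,
          Int.toNat_of_nonneg (by omega : (0 : ℤ) ≤ -k), ← zpow_neg, neg_neg]
      rw [this]; exact hgS
  -- the image of the span of characters lies in S
  set L := (ContinuousMap.toLp (E := ℂ) 2 ν ℂ : C(Circle, ℂ) →L[ℂ] Lp ℂ 2 ν) with hL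
  have hLspan : ∀ x ∈ Submodule.span ℂ (Set.range (char : ℤ → C(Circle, ℂ))), L x ∈ S := by
    intro x hx
    induction hx using Submodule.span_induction with
    | mem x hx => obtain ⟨k, rfl⟩ := hx; exact hchar k
    | zero => simpa using Submodule.zero_mem S
    | add x y _ _ hx hy => rw [map_add]; exact Submodule.add_mem S hx hy
    | smul c x _ hx => rw [_root_.map_smul]; exact Submodule.smul_mem S c hx
  -- hence the full range of L lies in S
  have hrange : ∀ g : C(Circle, ℂ), L g ∈ S := by
    intro g
    have hg : g ∈ closure ((Submodule.span ℂ (Set.range (char : ℤ → C(Circle, ℂ))) :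
        Submodule ℂ C(Circle, ℂ)) : Set C(Circle, ℂ)) := by
      rw [dense_iff_closure_eq.1 charAlg_dense]; trivial
    have := map_mem_closure L.continuous hg hLspan
    rwa [IsClosed.closure_eq (Submodule.isClosed_topologicalClosure _)] at this
  -- conclude by density of continuous functions in L²
  rw [Submodule.eq_top_iff']
  intro f
  have hdense : DenseRange (L : C(Circle, ℂ) → Lp ℂ 2 ν) :=
    ContinuousMap.toLp_denseRange ℂ ν ℂ (by norm_num)
  have hf : f ∈ closure (Set.range (L : C(Circle, ℂ) → Lp ℂ 2 ν)) := hdense f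
  have : f ∈ closure (S : Set (Lp ℂ 2 ν)) := by
    refine closure_mono ?_ hf
    rintro _ ⟨g, rfl⟩
    exact hrange g
  rwa [IsClosed.closure_eq (Submodule.isClosed_topologicalClosure _)] at this
end

section
/- Let T be an invertible measure-preserving transformation of a probability space (X, μ) whose Koopman operator 𝒰_T has purely discrete spectrum, i.e. there exist a countable orthonormal basis (φ_i)_{i∈ℕ} of L²_μ and scalars (λ_i)_{i∈ℕ} ⊆ ℂ with φ_i ∘ T = λ_i φ_i in L²_μ for every i. Then every observable f ∈ L²_μ is weakly predictive: f∘T belongs to the closed linear span of {f∘T^{−j} : j ≥ 0} in L²_μ. -/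
open MeasureTheory Filter

lemma exists_pow_inv_close (t : Finset ℕ) (lam : ℕ → ℂ)
    (h1 : ∀ i ∈ t, ‖lam i‖ = 1) {δ : ℝ} (hδ : 0 < δ) :
    ∃ j : ℕ, ∀ i ∈ t, ‖(lam i)⁻¹ ^ j - lam i‖ < δ := by
  set v : ℕ → (t → ℂ) := fun n i => lam i ^ n with hv
  have hbdd : ∀ n, v n ∈ Metric.closedBall (0 : t → ℂ) 1 := by
    intro n
    rw [Metric.mem_closedBall, dist_zero_right]
    refine (pi_norm_le_iff_of_nonneg zero_le_one).2 fun i => ?_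
    rw [norm_pow, h1 i i.2, one_pow]
  obtain ⟨a, -, ψ, hψ, hlim⟩ :=
    tendsto_subseq_of_bounded Metric.isBounded_closedBall hbdd
  have hcau : ∃ m m' : ℕ, m < m' ∧ dist (v m) (v m') < δ := by
    rw [Metric.tendsto_atTop] at hlim
    obtain ⟨N, hN⟩ := hlim (δ/2) (by linarith)
    refine ⟨ψ N, ψ (N+1), hψ (by omega), ?_⟩
    calc dist (v (ψ N)) (v (ψ (N+1)))
        ≤ dist ((v ∘ ψ) N) a + dist ((v ∘ ψ) (N+1)) a := dist_triangle_right _ _ _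
      _ < δ/2 + δ/2 := by gcongr <;> [exact hN N le_rfl; exact hN (N+1) (by omega)]
      _ = δ := by ring
  obtain ⟨m, m', hmm, hd⟩ := hcau
  set n := m' - m with hn
  have hmn : m' = m + n := by omega
  refine ⟨n - 1, fun i hi => ?_⟩
  have hne : lam i ≠ 0 := fun h => by simpa [h] using h1 i hi
  have hnorm : ‖lam i‖ = 1 := h1 i hi
  have hkey : ‖lam i ^ n - 1‖ < δ := by
    have hco : dist (v m ⟨i, hi⟩) (v m' ⟨i, hi⟩) ≤ dist (v m) (v m') :=
      dist_le_pi_dist _ _ _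
    have : dist (lam i ^ m) (lam i ^ m') < δ := lt_of_le_of_lt hco hd
    rw [dist_eq_norm] at this
    calc ‖lam i ^ n - 1‖ = ‖lam i ^ m‖ * ‖lam i ^ n - 1‖ := by
          rw [norm_pow, hnorm, one_pow, one_mul]
      _ = ‖lam i ^ m * (lam i ^ n - 1)‖ := (norm_mul _ _).symm
      _ = ‖lam i ^ m' - lam i ^ m‖ := by rw [hmn, pow_add]; ring_nf
      _ < δ := by rwa [norm_sub_rev]
  have hj1 : n - 1 + 1 = n := by omega
  have heq : (lam i)⁻¹ ^ (n - 1) - lam i = (lam i)⁻¹ ^ (n - 1) * (1 - lam i ^ n) := by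
    rw [← hj1, pow_succ, Nat.add_sub_cancel]
    rw [mul_sub, mul_one, ← mul_assoc, ← mul_pow, inv_mul_cancel₀ hne, one_pow, one_mul]
  rw [heq, norm_mul, norm_pow, norm_inv, hnorm, inv_one, one_pow, one_mul, norm_sub_rev]
  exact hkey

/-- if the Koopman operator of an invertible measure-preserving transformation
`T` has purely discrete spectrum, i.e. there is a countable orthonormal basis `(φ_i)` of
`L²_μ` consisting of eigenfunctions (`φ_i ∘ T = λ_i φ_i`), then every observable `f ∈ L²_μ`
is weakly predictive: `f∘T` belongs to the closed linear span of `{f∘T^{-j} : j ≥ 0}`. -/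
theorem weakly_predictive_of_discrete_spectrum
    {X : Type*} [MeasurableSpace X] (μ : Measure X) [IsProbabilityMeasure μ]
    (T T' : X → X) (hT : MeasurePreserving T μ μ) (hT' : MeasurePreserving T' μ μ)
    (hinv₁ : ∀ᵐ x ∂μ, T' (T x) = x) (hinv₂ : ∀ᵐ x ∂μ, T (T' x) = x)
    (φ : ℕ → Lp ℂ 2 μ) (hon : Orthonormal ℂ φ)
    (htotal : (Submodule.span ℂ (Set.range φ)).topologicalClosure = ⊤)
    (lam : ℕ → ℂ) (heig : ∀ i, koopman T hT (φ i) = lam i • φ i) :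
    ∀ f : Lp ℂ 2 μ,
      koopman T hT f ∈
        (Submodule.span ℂ
          (Set.range fun j : ℕ => ((koopman T' hT') ^ j) f)).topologicalClosure := by
  intro f
  set U := koopman T hT with hU
  set V := koopman T' hT' with hVdef
  -- norm preservation
  have hnU : ∀ g : Lp ℂ 2 μ, ‖U g‖ = ‖g‖ := fun g =>
    (Lp.compMeasurePreservingₗᵢ ℂ T hT).norm_map g
  have hnV : ∀ g : Lp ℂ 2 μ, ‖V g‖ = ‖g‖ := fun g =>
    (Lp.compMeasurePreservingₗᵢ ℂ T' hT').norm_map g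
  have hnVj : ∀ (j : ℕ) (g : Lp ℂ 2 μ), ‖(V ^ j) g‖ = ‖g‖ := by
    intro j
    induction j with
    | zero => intro g; simp
    | succ k ih =>
        intro g
        rw [pow_succ, ContinuousLinearMap.mul_apply, ih, hnV]
  -- V ∘ U = id
  have hVU : ∀ g : Lp ℂ 2 μ, V (U g) = g := by
    intro g
    apply Lp.ext
    have h1 : (U g : X → ℂ) =ᵐ[μ] (g : X → ℂ) ∘ T :=
      Lp.coeFn_compMeasurePreserving g hT
    have h2 : (V (U g) : X → ℂ) =ᵐ[μ] (U g : X → ℂ) ∘ T' :=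
      Lp.coeFn_compMeasurePreserving (U g) hT'
    have h3 : ((U g : X → ℂ) ∘ T') =ᵐ[μ] ((g : X → ℂ) ∘ T) ∘ T' :=
      hT'.quasiMeasurePreserving.ae_eq_comp h1
    have h4 : (((g : X → ℂ) ∘ T) ∘ T') =ᵐ[μ] (g : X → ℂ) :=
      hinv₂.mono fun x hx => by simp [Function.comp, hx]
    exact h2.trans (h3.trans h4)
  -- eigenvalues have modulus one
  have hlam : ∀ i, ‖lam i‖ = 1 := by
    intro i
    have h := hnU (φ i)
    rw [hU] at h
    rw [heig i, norm_smul, hon.1 i, mul_one] at h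
    exact h
  have hlamne : ∀ i, lam i ≠ 0 := fun i h => by simpa [h] using hlam i
  -- V is the inverse on eigenfunctions
  have hVφ : ∀ i, V (φ i) = (lam i)⁻¹ • φ i := by
    intro i
    have h := hVU (φ i)
    rw [hU, heig i, _root_.map_smul] at h
    calc V (φ i) = (lam i)⁻¹ • (lam i • V (φ i)) := by
          rw [smul_smul, inv_mul_cancel₀ (hlamne i), one_smul]
      _ = (lam i)⁻¹ • φ i := by rw [h]
  have hVjφ : ∀ (j : ℕ) (i : ℕ), (V ^ j) (φ i) = ((lam i)⁻¹) ^ j • φ i := by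
    intro j i
    induction j with
    | zero => simp
    | succ k ih =>
        rw [pow_succ, ContinuousLinearMap.mul_apply, hVφ i, _root_.map_smul, ih,
          smul_smul, pow_succ]
        ring_nf
  -- reduce to metric approximation
  rw [← SetLike.mem_coe, Submodule.topologicalClosure_coe, Metric.mem_closure_iff]
  intro ε hε
  -- approximate f by a finite combination of the φ i
  have hf : f ∈ closure ((Submodule.span ℂ (Set.range φ) : Submodule ℂ (Lp ℂ 2 μ)) :
      Set (Lp ℂ 2 μ)) := by
    rw [← Submodule.topologicalClosure_coe, htotal]
    trivial
  rw [Metric.mem_closure_iff] at hf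
  obtain ⟨g, hgmem, hgdist⟩ := hf (ε/4) (by linarith)
  rw [SetLike.mem_coe, Finsupp.mem_span_range_iff_exists_finsupp] at hgmem
  obtain ⟨c, hc⟩ := hgmem
  set B : ℝ := ∑ i ∈ c.support, ‖c i‖ with hB
  have hBnn : 0 ≤ B := Finset.sum_nonneg fun i _ => norm_nonneg _
  set δ : ℝ := ε / (4 * (B + 1)) with hδdef
  have hδpos : 0 < δ := by positivity
  obtain ⟨j, hj⟩ := exists_pow_inv_close c.support lam (fun i _ => hlam i) hδpos
  refine ⟨(V ^ j) f, Submodule.subset_span ⟨j, rfl⟩, ?_⟩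
  -- the middle estimate on g
  have hmid : ‖U g - (V ^ j) g‖ < ε / 4 := by
    have hUg : U g = c.sum fun i a => (a * lam i) • φ i := by
      rw [← hc, map_finsuppSum]
      refine Finsupp.sum_congr fun i _ => ?_
      rw [_root_.map_smul, hU, heig i, smul_smul]
    have hVg : (V ^ j) g = c.sum fun i a => (a * ((lam i)⁻¹) ^ j) • φ i := by
      rw [← hc, map_finsuppSum]
      refine Finsupp.sum_congr fun i _ => ?_
      rw [_root_.map_smul, hVjφ j i, smul_smul]
    rw [hUg, hVg, Finsupp.sum, Finsupp.sum, ← Finset.sum_sub_distrib]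
    have hterm : ∀ i ∈ c.support,
        ‖(c i * lam i) • φ i - (c i * ((lam i)⁻¹) ^ j) • φ i‖ ≤ ‖c i‖ * δ := by
      intro i hi
      rw [← sub_smul, norm_smul, hon.1 i, mul_one]
      have : c i * lam i - c i * ((lam i)⁻¹) ^ j = -(c i * (((lam i)⁻¹) ^ j - lam i)) := by
        ring
      rw [this, norm_neg, norm_mul]
      exact mul_le_mul_of_nonneg_left (le_of_lt (hj i hi)) (norm_nonneg _)
    calc ‖∑ i ∈ c.support, ((c i * lam i) • φ i - (c i * ((lam i)⁻¹) ^ j) • φ i)‖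
        ≤ ∑ i ∈ c.support, ‖(c i * lam i) • φ i - (c i * ((lam i)⁻¹) ^ j) • φ i‖ :=
          norm_sum_le _ _
      _ ≤ ∑ i ∈ c.support, ‖c i‖ * δ := Finset.sum_le_sum hterm
      _ = B * δ := by rw [← Finset.sum_mul]
      _ < (B + 1) * δ := by nlinarith
      _ = ε / 4 := by rw [hδdef]; field_simp
  -- assemble
  have h1 : dist (U f) (U g) < ε / 4 := by
    rw [dist_eq_norm, ← map_sub, hnU, ← dist_eq_norm]
    exact hgdist
  have h3 : dist ((V ^ j) g) ((V ^ j) f) < ε / 4 := by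
    rw [dist_eq_norm, ← map_sub, hnVj, ← dist_eq_norm]
    exact dist_comm f g ▸ hgdist
  have h2 : dist (U g) ((V ^ j) g) < ε / 4 := by rw [dist_eq_norm]; exact hmid
  calc dist (U f) ((V ^ j) f)
      ≤ dist (U f) (U g) + dist (U g) ((V ^ j) g) + dist ((V ^ j) g) ((V ^ j) f) :=
        dist_triangle4 _ _ _ _
    _ < ε / 4 + ε / 4 + ε / 4 := by linarith
    _ < ε := by linarith
end

section
/- Let T be an invertible measure-preserving transformation of a probability space (X, μ), f ∈ L²_μ, d ∈ ℕ, and let 𝒰_d : 𝒦_d → 𝒦_d be the compression of the Koopman operator, 𝒰_d g = Π_{𝒦_d}(g∘T) for g ∈ 𝒦_d. Define the autocorrelations A(n) = ⟨f∘Tⁿ, f⟩_{L²_μ} and A_d(n) = ⟨𝒰_dⁿ f, f⟩_{L²_μ}. Then: (i) A(n) = A_d(n) for every n ≤ d; (ii) |A(d+1) − A_d(d+1)| ≤ ‖Π_{𝒦_d}(f∘T) − f∘T‖_{L²_μ} · ‖f‖_{L²_μ}; and (iii) if Π_{𝒦_d⁻}^⊥ f ≠ 0, then for every n ≥ d+2,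 |A(n) − A_d(n)| ≤ (n − d) · (‖Π_{𝒦_d}^⊥(f∘T)‖_{L²_μ} / ‖Π_{𝒦_d⁻}^⊥ f‖_{L²_μ}) · ‖f‖²_{L²_μ}. -/
open MeasureTheory Filter

/-- The reduced Krylov space `𝒦_d⁻ = span {f∘T⁻¹, …, f∘T^{-d+1}}`. -/
noncomputable def krylovMinus {X : Type*} [MeasurableSpace X] {μ : Measure X}
    (T' : X → X) (hT' : MeasurePreserving T' μ μ) (f : Lp ℂ 2 μ) (d : ℕ) :
    Submodule ℂ (Lp ℂ 2 μ) :=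
  Submodule.span ℂ (Set.range fun j : Fin (d - 1) => ((koopman T' hT') ^ ((j : ℕ) + 1)) f)

instance {X : Type*} [MeasurableSpace X] {μ : Measure X}
    (T' : X → X) (hT' : MeasurePreserving T' μ μ) (f : Lp ℂ 2 μ) (d : ℕ) :
    FiniteDimensional ℂ (krylovMinus T' hT' f d) :=
  FiniteDimensional.span_of_finite ℂ (Set.finite_range _)

/-- The compression `𝒰_d = Π_{𝒦_d} ∘ 𝒰 : 𝒦_d → 𝒦_d` of the Koopman operator to the
Krylov space. -/
noncomputable def compressedKoopman {X : Type*} [MeasurableSpace X] {μ : Measure X}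
    (T T' : X → X) (hT : MeasurePreserving T μ μ) (hT' : MeasurePreserving T' μ μ)
    (f : Lp ℂ 2 μ) (d : ℕ) :
    krylov T' hT' f d →L[ℂ] krylov T' hT' f d :=
  (Submodule.orthogonalProjectionOnto (krylov T' hT' f d)).comp
    ((koopman T hT).comp (krylov T' hT' f d).subtypeL)

section aux
variable {X : Type*} [MeasurableSpace X] {μ : Measure X}
  {T T' : X → X} (hT : MeasurePreserving T μ μ) (hT' : MeasurePreserving T' μ μ)

theorem koopman_koopman (hinv : ∀ᵐ x ∂μ, T' (T x) = x) (g : Lp ℂ 2 μ) :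
    koopman T hT (koopman T' hT' g) = g := by
  apply Lp.ext
  have h1 : ⇑(koopman T hT (koopman T' hT' g)) =ᵐ[μ] ⇑(koopman T' hT' g) ∘ T :=
    Lp.coeFn_compMeasurePreserving _ hT
  have h2 : ⇑(koopman T' hT' g) =ᵐ[μ] ⇑g ∘ T' := Lp.coeFn_compMeasurePreserving _ hT'
  have h3 : ⇑(koopman T' hT' g) ∘ T =ᵐ[μ] (⇑g ∘ T') ∘ T :=
    hT.quasiMeasurePreserving.ae_eq h2
  refine h1.trans (h3.trans ?_)
  filter_upwards [hinv] with x hx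
  simp [Function.comp, hx]

theorem norm_koopman (g : Lp ℂ 2 μ) : ‖koopman T hT g‖ = ‖g‖ :=
  Lp.norm_compMeasurePreserving g hT

theorem inner_koopman_koopman (a b : Lp ℂ 2 μ) :
    (inner ℂ (koopman T hT a) (koopman T hT b) : ℂ) = inner ℂ a b :=
  (Lp.compMeasurePreservingₗᵢ ℂ T hT).inner_map_map a b

theorem inner_koopman_left (hinv : ∀ᵐ x ∂μ, T' (T x) = x) (a b : Lp ℂ 2 μ) :
    (inner ℂ (koopman T hT a) b : ℂ) = inner ℂ a (koopman T' hT' b) := by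
  conv_lhs => rw [← koopman_koopman hT hT' hinv b]
  exact inner_koopman_koopman hT a _

theorem key_bound (hinv : ∀ᵐ x ∂μ, T' (T x) = x) (f : Lp ℂ 2 μ) (d' : ℕ)
    {g : Lp ℂ 2 μ} (hg : g ∈ krylov T' hT' f (d' + 1)) :
    ‖koopman T hT g -
        (Submodule.orthogonalProjectionOnto (krylov T' hT' f (d' + 1)) (koopman T hT g) : Lp ℂ 2 μ)‖ *
      ‖f - (Submodule.orthogonalProjectionOnto (krylovMinus T' hT' f (d' + 1)) f : Lp ℂ 2 μ)‖ ≤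
    ‖koopman T hT f -
        (Submodule.orthogonalProjectionOnto (krylov T' hT' f (d' + 1)) (koopman T hT f) : Lp ℂ 2 μ)‖ * ‖g‖ := by
  set U := koopman T hT with hU
  set V := koopman T' hT' with hV
  set K := krylov T' hT' f (d' + 1) with hK
  set Km := krylovMinus T' hT' f (d' + 1) with hKm
  obtain ⟨c, hc⟩ := (Submodule.mem_span_range_iff_exists_fun ℂ).mp hg
  set w : Lp ℂ 2 μ := ∑ j : Fin d', c j.succ • (V ^ ((j : ℕ) + 1)) f with hw
  have hgdecomp : g = c 0 • f + w := by
    rw [← hc, Fin.sum_univ_succ]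
    simp [hw, Fin.val_succ]
    rfl
  have hwKm : w ∈ Km := by
    refine Submodule.sum_mem _ fun j _ => Submodule.smul_mem _ _ ?_
    exact Submodule.subset_span ⟨j, rfl⟩
  have hUwK : U w ∈ K := by
    rw [hw, map_sum]
    refine Submodule.sum_mem _ fun j _ => ?_
    rw [_root_.map_smul]
    refine Submodule.smul_mem _ _ ?_
    have h5 : U ((V ^ ((j : ℕ) + 1)) f) = (V ^ (j : ℕ)) f := by
      rw [pow_succ', ContinuousLinearMap.mul_apply]
      exact koopman_koopman hT hT' hinv _
    rw [h5]
    exact Submodule.subset_span ⟨⟨(j : ℕ), by omega⟩, rfl⟩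
  have hPmw : (Submodule.orthogonalProjectionOnto Km w : Lp ℂ 2 μ) = w :=
    Submodule.starProjection_eq_self_iff.mpr hwKm
  have hsub : g - (Submodule.orthogonalProjectionOnto Km g : Lp ℂ 2 μ) =
      c 0 • (f - (Submodule.orthogonalProjectionOnto Km f : Lp ℂ 2 μ)) := by
    rw [hgdecomp, map_add, _root_.map_smul, Submodule.coe_add, Submodule.coe_smul, hPmw]
    module
  have hc0 : ‖c 0‖ * ‖f - (Submodule.orthogonalProjectionOnto Km f : Lp ℂ 2 μ)‖ ≤ ‖g‖ := by
    have hmin : ‖g - (Submodule.orthogonalProjectionOnto Km g : Lp ℂ 2 μ)‖ ≤ ‖g - ((0 : Km) : Lp ℂ 2 μ)‖ := by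
      rw [← Submodule.starProjection_apply, Submodule.starProjection_minimal]
      exact ciInf_le ⟨0, by rintro x ⟨y, rfl⟩; exact norm_nonneg _⟩ 0
    calc ‖c 0‖ * ‖f - (Submodule.orthogonalProjectionOnto Km f : Lp ℂ 2 μ)‖
        = ‖c 0 • (f - (Submodule.orthogonalProjectionOnto Km f : Lp ℂ 2 μ))‖ := (norm_smul _ _).symm
      _ = ‖g - (Submodule.orthogonalProjectionOnto Km g : Lp ℂ 2 μ)‖ := by rw [hsub]
      _ ≤ ‖g - ((0 : Km) : Lp ℂ 2 μ)‖ := hmin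
      _ = ‖g‖ := by simp
  have hUg : U g = c 0 • U f + U w := by rw [hgdecomp, map_add, _root_.map_smul]
  have hPUw : (Submodule.orthogonalProjectionOnto K (U w) : Lp ℂ 2 μ) = U w :=
    Submodule.starProjection_eq_self_iff.mpr hUwK
  have hsub2 : U g - (Submodule.orthogonalProjectionOnto K (U g) : Lp ℂ 2 μ) =
      c 0 • (U f - (Submodule.orthogonalProjectionOnto K (U f) : Lp ℂ 2 μ)) := by
    rw [hUg, map_add, _root_.map_smul, Submodule.coe_add, Submodule.coe_smul, hPUw]
    module
  calc ‖U g - (Submodule.orthogonalProjectionOnto K (U g) : Lp ℂ 2 μ)‖ *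
        ‖f - (Submodule.orthogonalProjectionOnto Km f : Lp ℂ 2 μ)‖
      = ‖U f - (Submodule.orthogonalProjectionOnto K (U f) : Lp ℂ 2 μ)‖ *
          (‖c 0‖ * ‖f - (Submodule.orthogonalProjectionOnto Km f : Lp ℂ 2 μ)‖) := by
        rw [hsub2, norm_smul]; ring
    _ ≤ ‖U f - (Submodule.orthogonalProjectionOnto K (U f) : Lp ℂ 2 μ)‖ * ‖g‖ :=
        mul_le_mul_of_nonneg_left hc0 (norm_nonneg _)
end aux

/-- autocorrelation reproduction of the least squares filter.  With
`A(n) = ⟨𝒰ⁿ f, f⟩` and `A_d(n) = ⟨𝒰_dⁿ f, f⟩`: (i) `A(n) = A_d(n)` for `n ≤ d`;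
(ii) `|A(d+1) − A_d(d+1)| ≤ ‖Π_{𝒦_d}(𝒰f) − 𝒰f‖·‖f‖`; (iii) if `Π_{𝒦_d⁻}^⊥ f ≠ 0` then
for `n ≥ d+2`,
`|A(n) − A_d(n)| ≤ (n−d)·(‖Π_{𝒦_d}^⊥ 𝒰f‖ / ‖Π_{𝒦_d⁻}^⊥ f‖)·‖f‖²`. -/


theorem autocorrelation_bounds
    {X : Type*} [MeasurableSpace X] (μ : Measure X) [IsProbabilityMeasure μ]
    (T T' : X → X) (hT : MeasurePreserving T μ μ) (hT' : MeasurePreserving T' μ μ)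
    (hinv₁ : ∀ᵐ x ∂μ, T' (T x) = x) (hinv₂ : ∀ᵐ x ∂μ, T (T' x) = x)
    (f : Lp ℂ 2 μ) (d : ℕ) (hd : 0 < d) (hfK : f ∈ krylov T' hT' f d) :
    (∀ n : ℕ, n ≤ d →
      (inner ℂ (((koopman T hT) ^ n) f) f : ℂ) =
      (inner ℂ ((((compressedKoopman T T' hT hT' f d) ^ n)
          (⟨f, hfK⟩ : krylov T' hT' f d) : krylov T' hT' f d) : Lp ℂ 2 μ) f : ℂ)) ∧
    (‖(inner ℂ (((koopman T hT) ^ (d + 1)) f) f : ℂ) -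
        (inner ℂ ((((compressedKoopman T T' hT hT' f d) ^ (d + 1))
          (⟨f, hfK⟩ : krylov T' hT' f d) : krylov T' hT' f d) : Lp ℂ 2 μ) f : ℂ)‖ ≤
      ‖((Submodule.orthogonalProjectionOnto (krylov T' hT' f d)) (koopman T hT f) : Lp ℂ 2 μ) -
          koopman T hT f‖ * ‖f‖) ∧
    (f - ((Submodule.orthogonalProjectionOnto (krylovMinus T' hT' f d)) f : Lp ℂ 2 μ) ≠ 0 →
      ∀ n : ℕ, d + 2 ≤ n →
        ‖(inner ℂ (((koopman T hT) ^ n) f) f : ℂ) -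
            (inner ℂ ((((compressedKoopman T T' hT hT' f d) ^ n)
              (⟨f, hfK⟩ : krylov T' hT' f d) : krylov T' hT' f d) : Lp ℂ 2 μ) f : ℂ)‖ ≤
          ((n - d : ℕ) : ℝ) *
            (‖koopman T hT f -
                ((Submodule.orthogonalProjectionOnto (krylov T' hT' f d)) (koopman T hT f) : Lp ℂ 2 μ)‖ /
              ‖f - ((Submodule.orthogonalProjectionOnto (krylovMinus T' hT' f d)) f : Lp ℂ 2 μ)‖) *
            ‖f‖ ^ 2) := by
  set U := koopman T hT with hU
  set V := koopman T' hT' with hV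
  set K := krylov T' hT' f d with hK
  set Km := krylovMinus T' hT' f d with hKm
  set Ud := compressedKoopman T T' hT hT' f d with hUdd
  have hUV : ∀ g, U (V g) = g := koopman_koopman hT hT' hinv₁
  have hadj : ∀ a b : Lp ℂ 2 μ, (inner ℂ (U a) b : ℂ) = inner ℂ a (V b) :=
    inner_koopman_left hT hT' hinv₁
  have hmemK : ∀ j : ℕ, j < d → (V ^ j) f ∈ K :=
    fun j hj => Submodule.subset_span ⟨⟨j, hj⟩, rfl⟩
  have hnormV : ∀ j : ℕ, ‖(V ^ j) f‖ = ‖f‖ := by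
    intro j; induction j with
    | zero => simp
    | succ j ih => rw [pow_succ', ContinuousLinearMap.mul_apply, norm_koopman, ih]
  set q : Lp ℂ 2 μ → Lp ℂ 2 μ :=
    fun x => (Submodule.orthogonalProjectionOnto K (U x) : Lp ℂ 2 μ) with hq
  have hUdpow : ∀ n : ℕ, (((Ud ^ n) ⟨f, hfK⟩ : K) : Lp ℂ 2 μ) = q^[n] f := by
    intro n; induction n with
    | zero => simp
    | succ n ih =>
      rw [pow_succ', ContinuousLinearMap.mul_apply, Function.iterate_succ_apply', ← ih]
      rfl
  have hqK : ∀ n : ℕ, q^[n] f ∈ K := by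
    intro n; cases n with
    | zero => exact hfK
    | succ n => rw [Function.iterate_succ_apply']; exact SetLike.coe_mem _
  have hPnorm : ∀ z : Lp ℂ 2 μ, ‖(Submodule.orthogonalProjectionOnto K z : Lp ℂ 2 μ)‖ ≤ ‖z‖ := by
    intro z
    calc ‖(Submodule.orthogonalProjectionOnto K z : Lp ℂ 2 μ)‖ = ‖Submodule.orthogonalProjectionOnto K z‖ := rfl
      _ ≤ ‖Submodule.orthogonalProjectionOnto K‖ * ‖z‖ := (Submodule.orthogonalProjectionOnto K).le_opNorm z
      _ ≤ 1 * ‖z‖ := mul_le_mul_of_nonneg_right (Submodule.orthogonalProjectionOnto_norm_le K) (norm_nonneg _)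
      _ = ‖z‖ := one_mul _
  have hqnorm : ∀ n : ℕ, ‖q^[n] f‖ ≤ ‖f‖ := by
    intro n; induction n with
    | zero => simp
    | succ n ih =>
      rw [Function.iterate_succ_apply']
      calc ‖q (q^[n] f)‖ ≤ ‖U (q^[n] f)‖ := hPnorm _
        _ = ‖q^[n] f‖ := norm_koopman hT _
        _ ≤ ‖f‖ := ih
  set e : ℕ → Lp ℂ 2 μ := fun n => (U ^ n) f - q^[n] f with he
  have he0 : e 0 = 0 := by simp [he]
  have herec : ∀ n, e (n + 1) = U (e n) + (U (q^[n] f) - q (q^[n] f)) := by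
    intro n
    simp only [he]
    rw [pow_succ', ContinuousLinearMap.mul_apply, Function.iterate_succ_apply', map_sub]
    abel
  have horth : ∀ z w : Lp ℂ 2 μ, w ∈ K →
      (inner ℂ (U z - (Submodule.orthogonalProjectionOnto K (U z) : Lp ℂ 2 μ)) w : ℂ) = 0 :=
    fun z w hw => Submodule.starProjection_inner_eq_zero (U z) w hw
  have hstep : ∀ n k, k < d →
      (inner ℂ (e (n + 1)) ((V ^ k) f) : ℂ) = inner ℂ (e n) ((V ^ (k + 1)) f) := by
    intro n k hk
    rw [herec n, inner_add_left, horth _ _ (hmemK k hk), add_zero, hadj,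
      pow_succ' V k, ContinuousLinearMap.mul_apply]
  have hshift : ∀ j, j ≤ d → ∀ n, (inner ℂ (e (n + j)) f : ℂ) = inner ℂ (e n) ((V ^ j) f) := by
    intro j
    induction j with
    | zero => intro _ n; simp
    | succ j ih =>
      intro hj n
      have h1 : n + (j + 1) = (n + 1) + j := by omega
      rw [h1, ih (by omega) (n + 1), hstep n j (by omega)]
  have hdiff : ∀ n, (inner ℂ ((U ^ n) f) f : ℂ) -
      (inner ℂ (((Ud ^ n) ⟨f, hfK⟩ : K) : Lp ℂ 2 μ) f : ℂ) = inner ℂ (e n) f := by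
    intro n
    rw [hUdpow n, he, ← inner_sub_left]
  refine ⟨?_, ?_, ?_⟩
  · intro n hn
    have h2 := hshift n hn 0
    rw [zero_add, he0, inner_zero_left] at h2
    have h3 := hdiff n
    rw [h2] at h3
    exact sub_eq_zero.mp h3
  · have h2 := hshift d le_rfl 1
    have h3 : d + 1 = 1 + d := by omega
    rw [hdiff (d + 1), h3, h2]
    have he1 : e 1 = U f - (Submodule.orthogonalProjectionOnto K (U f) : Lp ℂ 2 μ) := by
      simp [he, hq]
    rw [he1]
    calc ‖(inner ℂ (U f - (Submodule.orthogonalProjectionOnto K (U f) : Lp ℂ 2 μ)) ((V ^ d) f) : ℂ)‖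
        ≤ ‖U f - (Submodule.orthogonalProjectionOnto K (U f) : Lp ℂ 2 μ)‖ * ‖(V ^ d) f‖ :=
          norm_inner_le_norm _ _
      _ = ‖(Submodule.orthogonalProjectionOnto K (U f) : Lp ℂ 2 μ) - U f‖ * ‖f‖ := by
          rw [norm_sub_rev, hnormV]
  · intro hne n hn
    have hpos : 0 < ‖f - (Submodule.orthogonalProjectionOnto Km f : Lp ℂ 2 μ)‖ := norm_pos_iff.mpr hne
    obtain ⟨d', rfl⟩ : ∃ d'', d = d'' + 1 := ⟨d - 1, by omega⟩
    set ε := ‖U f - (Submodule.orthogonalProjectionOnto K (U f) : Lp ℂ 2 μ)‖ with hεdef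
    set δ := ‖f - (Submodule.orthogonalProjectionOnto Km f : Lp ℂ 2 μ)‖ with hδdef
    have hkey : ∀ g ∈ K, ‖U g - (Submodule.orthogonalProjectionOnto K (U g) : Lp ℂ 2 μ)‖ ≤ ε / δ * ‖g‖ := by
      intro g hg
      have h := key_bound hT hT' hinv₁ f d' hg
      rw [div_mul_eq_mul_div, le_div_iff₀ hpos]
      exact h
    have hεδ : 0 ≤ ε / δ := div_nonneg (norm_nonneg _) (norm_nonneg _)
    have hgrow : ∀ m : ℕ, ‖e m‖ ≤ (m : ℝ) * (ε / δ * ‖f‖) := by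
      intro m; induction m with
      | zero => simp [he0]
      | succ m ih =>
        rw [herec m]
        calc ‖U (e m) + (U (q^[m] f) - q (q^[m] f))‖
            ≤ ‖U (e m)‖ + ‖U (q^[m] f) - q (q^[m] f)‖ := norm_add_le _ _
          _ ≤ (m : ℝ) * (ε / δ * ‖f‖) + ε / δ * ‖q^[m] f‖ := by
              rw [norm_koopman hT]
              exact add_le_add ih (hkey _ (hqK m))
          _ ≤ (m : ℝ) * (ε / δ * ‖f‖) + ε / δ * ‖f‖ :=
              add_le_add_right (mul_le_mul_of_nonneg_left (hqnorm m) hεδ) _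
          _ = ((m + 1 : ℕ) : ℝ) * (ε / δ * ‖f‖) := by push_cast; ring
    have h2 := hshift (d' + 1) le_rfl (n - (d' + 1))
    have h3 : (inner ℂ (e n) f : ℂ) = inner ℂ (e (n - (d' + 1))) ((V ^ (d' + 1)) f) := by
      conv_lhs => rw [show n = (n - (d' + 1)) + (d' + 1) from by omega]
      exact h2
    rw [hdiff n, h3]
    calc ‖(inner ℂ (e (n - (d' + 1))) ((V ^ (d' + 1)) f) : ℂ)‖
        ≤ ‖e (n - (d' + 1))‖ * ‖(V ^ (d' + 1)) f‖ := norm_inner_le_norm _ _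
      _ ≤ ((n - (d' + 1) : ℕ) : ℝ) * (ε / δ * ‖f‖) * ‖f‖ := by
          rw [hnormV]
          exact mul_le_mul_of_nonneg_right (hgrow _) (norm_nonneg f)
      _ = ((n - (d' + 1) : ℕ) : ℝ) * (ε / δ) * ‖f‖ ^ 2 := by ring
end

section
/- Let T be an invertible measure-preserving transformation of a probability space (X, μ), f ∈ L²_μ with Π_{𝒦_d⁻}^⊥ f ≠ 0, and let 𝒰_d : 𝒦_d → 𝒦_d be the compression of the Koopman operator, 𝒰_d g = Π_{𝒦_d}(g∘T). If (λ_d, φ_d) is an eigenpair of 𝒰_d with ‖φ_d‖_{L²_μ} = 1, then ‖φ_d∘T − λ_d φ_d‖_{L²_μ} ≤ ‖Π_{𝒦_d}^⊥(f∘T)‖_{L²_μ} / ‖Π_{𝒦_d⁻}^⊥ f‖_{L²_μ}; that is, λ_d lies in the ε-pseudospectrum of the Koopman operator 𝒰 with ε = ‖Π_{𝒦_d}^⊥ 𝒰 f‖ / ‖Π_{𝒦_d⁻}^⊥ f‖. -/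
open MeasureTheory Filter

lemma koopman_koopman_eq {X : Type*} [MeasurableSpace X] {μ : Measure X}
    {T T' : X → X} (hT : MeasurePreserving T μ μ) (hT' : MeasurePreserving T' μ μ)
    (hinv₁ : ∀ᵐ x ∂μ, T' (T x) = x) (g : Lp ℂ 2 μ) :
    koopman T hT (koopman T' hT' g) = g := by
  apply Lp.ext
  have h1 : (koopman T hT (koopman T' hT' g) : X → ℂ) =ᵐ[μ] (koopman T' hT' g) ∘ T :=
    Lp.coeFn_compMeasurePreserving _ hT
  have h2 : ((koopman T' hT' g : X → ℂ)) ∘ T =ᵐ[μ] ((g : X → ℂ) ∘ T') ∘ T := by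
    exact hT.quasiMeasurePreserving.ae_eq_comp
      (Lp.coeFn_compMeasurePreserving g hT')
  have h3 : ((g : X → ℂ) ∘ T') ∘ T =ᵐ[μ] (g : X → ℂ) :=
    hinv₁.mono fun x hx => by simp [Function.comp, hx]
  exact h1.trans (h2.trans h3)

lemma norm_sub_orthProj_le {E : Type*} [NormedAddCommGroup E] [InnerProductSpace ℂ E]
    (K : Submodule ℂ E) [K.HasOrthogonalProjection] (x : E) :
    ‖x - (Submodule.orthogonalProjectionOnto K x : E)‖ ≤ ‖x‖ := by
  have horth : inner (𝕜 := ℂ) ((Submodule.orthogonalProjectionOnto K x : E)) (x - (Submodule.orthogonalProjectionOnto K x : E)) = 0 :=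
    Submodule.inner_right_of_mem_orthogonal (Submodule.orthogonalProjectionOnto K x).2
      (K.sub_starProjection_mem_orthogonal x)
  have h := norm_add_sq_eq_norm_sq_add_norm_sq_of_inner_eq_zero _ _ horth
  rw [add_sub_cancel] at h
  nlinarith [norm_nonneg x, norm_nonneg (x - (Submodule.orthogonalProjectionOnto K x : E)),
    norm_nonneg (Submodule.orthogonalProjectionOnto K x : E), sq_nonneg ‖(Submodule.orthogonalProjectionOnto K x : E)‖]

set_option maxHeartbeats 1000000 in
/-- pseudospectral bound.  If `(λ_d, φ_d)` is a unit-norm eigenpair of the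
compression `𝒰_d` of the Koopman operator to the Krylov space `𝒦_d`, and
`Π_{𝒦_d⁻}^⊥ f ≠ 0`, then
`‖𝒰 φ_d − λ_d φ_d‖ ≤ ‖Π_{𝒦_d}^⊥(𝒰 f)‖ / ‖Π_{𝒦_d⁻}^⊥ f‖`, i.e. `λ_d` lies in the
`ε`-pseudospectrum of `𝒰` with this `ε`. -/
theorem compressedKoopman_eigenvalue_pseudospectrum
    {X : Type*} [MeasurableSpace X] (μ : Measure X) [IsProbabilityMeasure μ]
    (T T' : X → X) (hT : MeasurePreserving T μ μ) (hT' : MeasurePreserving T' μ μ)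
    (hinv₁ : ∀ᵐ x ∂μ, T' (T x) = x) (hinv₂ : ∀ᵐ x ∂μ, T (T' x) = x)
    (f : Lp ℂ 2 μ) (d : ℕ)
    (hne : f - ((Submodule.orthogonalProjectionOnto (krylovMinus T' hT' f d)) f : Lp ℂ 2 μ) ≠ 0)
    (lam : ℂ) (φ : krylov T' hT' f d) (hφ : ‖(φ : Lp ℂ 2 μ)‖ = 1)
    (heig : compressedKoopman T T' hT hT' f d φ = lam • φ) :
    ‖koopman T hT (φ : Lp ℂ 2 μ) - lam • (φ : Lp ℂ 2 μ)‖ ≤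
      ‖koopman T hT f -
          ((Submodule.orthogonalProjectionOnto (krylov T' hT' f d)) (koopman T hT f) : Lp ℂ 2 μ)‖ /
        ‖f - ((Submodule.orthogonalProjectionOnto (krylovMinus T' hT' f d)) f : Lp ℂ 2 μ)‖ := by
  classical
  have key : ∀ g : Lp ℂ 2 μ, koopman T hT (koopman T' hT' g) = g :=
    koopman_koopman_eq hT hT' hinv₁
  obtain _ | n := d
  · exfalso
    have hbot : krylov T' hT' f 0 = ⊥ := by simp [krylov]
    have h0 : (φ : Lp ℂ 2 μ) ∈ (⊥ : Submodule ℂ (Lp ℂ 2 μ)) := by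
      rw [← hbot]; exact φ.2
    rw [Submodule.mem_bot] at h0
    rw [h0] at hφ
    simp at hφ
  have heig' : ((Submodule.orthogonalProjectionOnto (krylov T' hT' f (n + 1)))
        (koopman T hT (φ : Lp ℂ 2 μ)) : Lp ℂ 2 μ) = lam • (φ : Lp ℂ 2 μ) := by
    have := congrArg (Subtype.val) heig
    simpa [compressedKoopman] using this
  obtain ⟨c, hc⟩ := (Submodule.mem_span_range_iff_exists_fun ℂ).mp φ.2
  set g : Lp ℂ 2 μ := ∑ j : Fin n, c j.succ • ((koopman T' hT') ^ ((j : ℕ) + 1)) f with hgdef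
  have hsum : (φ : Lp ℂ 2 μ) = c 0 • f + g := by
    rw [← hc, Fin.sum_univ_succ]
    simp [hgdef, Fin.val_succ]
  have hgKm : g ∈ krylovMinus T' hT' f (n + 1) := by
    refine Submodule.sum_mem _ fun j _ => Submodule.smul_mem _ _ ?_
    exact Submodule.subset_span ⟨j, rfl⟩
  have hUg_eq : koopman T hT g = ∑ j : Fin n, c j.succ • ((koopman T' hT') ^ (j : ℕ)) f := by
    rw [hgdef, map_sum]
    refine Finset.sum_congr rfl fun j _ => ?_
    rw [_root_.map_smul]
    congr 1
    rw [pow_succ']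
    exact key _
  have hUgK : koopman T hT g ∈ krylov T' hT' f (n + 1) := by
    rw [hUg_eq]
    refine Submodule.sum_mem _ fun j _ => Submodule.smul_mem _ _ ?_
    exact Submodule.subset_span ⟨j.castSucc, by simp⟩
  have hUφ : koopman T hT (φ : Lp ℂ 2 μ) = c 0 • koopman T hT f + koopman T hT g := by
    rw [hsum, map_add, _root_.map_smul]
  have hprojK : ((Submodule.orthogonalProjectionOnto (krylov T' hT' f (n + 1)))
        (koopman T hT (φ : Lp ℂ 2 μ)) : Lp ℂ 2 μ)
      = c 0 • ((Submodule.orthogonalProjectionOnto (krylov T' hT' f (n + 1))) (koopman T hT f) : Lp ℂ 2 μ)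
        + koopman T hT g := by
    rw [hUφ, map_add, _root_.map_smul, Submodule.coe_add, Submodule.coe_smul,
      (Submodule.starProjection_apply _ (koopman T hT g)).symm.trans
        (Submodule.starProjection_eq_self_iff.mpr hUgK)]
  have hdiff : koopman T hT (φ : Lp ℂ 2 μ)
        - ((Submodule.orthogonalProjectionOnto (krylov T' hT' f (n + 1)))
            (koopman T hT (φ : Lp ℂ 2 μ)) : Lp ℂ 2 μ)
      = c 0 • (koopman T hT f
          - ((Submodule.orthogonalProjectionOnto (krylov T' hT' f (n + 1))) (koopman T hT f) : Lp ℂ 2 μ)) := by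
    rw [hprojK, hUφ, smul_sub]
    abel
  have hprojKm : ((Submodule.orthogonalProjectionOnto (krylovMinus T' hT' f (n + 1)))
        (φ : Lp ℂ 2 μ) : Lp ℂ 2 μ)
      = c 0 • ((Submodule.orthogonalProjectionOnto (krylovMinus T' hT' f (n + 1))) f : Lp ℂ 2 μ) + g := by
    rw [hsum, map_add, _root_.map_smul, Submodule.coe_add, Submodule.coe_smul,
      (Submodule.starProjection_apply _ g).symm.trans
        (Submodule.starProjection_eq_self_iff.mpr hgKm)]
  have hdiffKm : (φ : Lp ℂ 2 μ)
        - ((Submodule.orthogonalProjectionOnto (krylovMinus T' hT' f (n + 1))) (φ : Lp ℂ 2 μ) : Lp ℂ 2 μ)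
      = c 0 • (f - ((Submodule.orthogonalProjectionOnto (krylovMinus T' hT' f (n + 1))) f : Lp ℂ 2 μ)) := by
    rw [hprojKm, hsum, smul_sub]
    abel
  have hBpos : 0 < ‖f - ((Submodule.orthogonalProjectionOnto (krylovMinus T' hT' f (n + 1))) f : Lp ℂ 2 μ)‖ :=
    norm_pos_iff.mpr hne
  have h1 : ‖c 0‖ * ‖f - ((Submodule.orthogonalProjectionOnto (krylovMinus T' hT' f (n + 1))) f : Lp ℂ 2 μ)‖
      ≤ 1 := by
    calc ‖c 0‖ * ‖f - ((Submodule.orthogonalProjectionOnto (krylovMinus T' hT' f (n + 1))) f : Lp ℂ 2 μ)‖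
        = ‖c 0 • (f - ((Submodule.orthogonalProjectionOnto (krylovMinus T' hT' f (n + 1))) f : Lp ℂ 2 μ))‖ := by
          rw [norm_smul]
      _ = ‖(φ : Lp ℂ 2 μ) - ((Submodule.orthogonalProjectionOnto (krylovMinus T' hT' f (n + 1)))
            (φ : Lp ℂ 2 μ) : Lp ℂ 2 μ)‖ := by rw [hdiffKm]
      _ ≤ ‖(φ : Lp ℂ 2 μ)‖ := norm_sub_orthProj_le _ _
      _ = 1 := hφ
  have hLHS : ‖koopman T hT (φ : Lp ℂ 2 μ) - lam • (φ : Lp ℂ 2 μ)‖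
      = ‖c 0‖ * ‖koopman T hT f
          - ((Submodule.orthogonalProjectionOnto (krylov T' hT' f (n + 1))) (koopman T hT f) : Lp ℂ 2 μ)‖ := by
    rw [← heig', hdiff, norm_smul]
  rw [hLHS, le_div_iff₀ hBpos]
  have hAnn : (0:ℝ) ≤ ‖koopman T hT f
      - ((Submodule.orthogonalProjectionOnto (krylov T' hT' f (n + 1))) (koopman T hT f) : Lp ℂ 2 μ)‖ :=
    norm_nonneg _
  nlinarith [h1, hAnn, norm_nonneg (c 0), hBpos.le]
end
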